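/- arXiv:0807.5037 — 3 statements merged into one kernel-verified Lean document; each statement's English description precedes it below -/
import Mathlib

section
/- Let $p$ be an odd prime, let $I_p \subseteq \mathbb{Z}/p\mathbb{Z}$ be an interval of length $(p-1)/2$, and let $N \geq 1$. Suppose $A \subseteq \{1, \dots, N\}$ is a set such that no $a \in A$ has $a \bmod p \in I_p$. Then $\max\Big( \big|\sum_{n \in A} e(n/p)\big|, \big|\sum_{n \in A} e(2n/p)\big| \Big) \geq |A|/3$. -/
open Complex Real Finset

lemma exp_nat_congr (p : ℕ) (hp : 0 < p) {n r : ℕ} (h : (n : ZMod p) = (r : ZMod p)) :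
    Complex.exp (2 * Real.pi * Complex.I * ((n : ℂ) / p)) =
      Complex.exp (2 * Real.pi * Complex.I * ((r : ℂ) / p)) := by
  rw [ZMod.natCast_eq_natCast_iff] at h
  obtain ⟨k, hk⟩ := (Nat.ModEq.dvd h)
  have hp' : (p : ℂ) ≠ 0 := by exact_mod_cast hp.ne'
  have hr : (r : ℂ) = n + p * k := by
    have : (r : ℤ) = n + p * k := by linarith [hk]
    exact_mod_cast this
  rw [hr]
  have : 2 * (Real.pi:ℂ) * Complex.I * (((n:ℂ) + p * k) / p)
      = 2 * Real.pi * Complex.I * ((n:ℂ)/p) + k * (2 * Real.pi * Complex.I) := by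
    field_simp
  rw [this, Complex.exp_add, Complex.exp_int_mul_two_pi_mul_I, mul_one]

lemma re_neg_two_I_exp (x : ℝ) :
    ((-2 * Complex.I) * Complex.exp (x * Complex.I)).re = 2 * Real.sin x := by
  rw [Complex.exp_mul_I]
  simp [Complex.sin_ofReal_re]

/-- Lemma 3.1: if `A ⊆ {1, …, N}` avoids an interval `I ⊆ ℤ/pℤ` of length `(p-1)/2`
modulo the odd prime `p`, then one of the Fourier coefficients of `A` at `1/p` or `2/p`
has magnitude at least `|A|/3`. -/
theorem large_fourier_coefficient (p : ℕ) (hp : p.Prime) (hodd : Odd p)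
    (I : Finset (ZMod p))
    (hI : ∃ a : ZMod p, I = (Finset.range ((p - 1) / 2)).image (fun k : ℕ => a + (k : ZMod p)))
    (N : ℕ) (hN : 1 ≤ N) (A : Finset ℕ) (hA : A ⊆ Finset.Icc 1 N)
    (hAI : ∀ n ∈ A, (n : ZMod p) ∉ I) :
    (A.card : ℝ) / 3 ≤
      max ‖∑ n ∈ A, Complex.exp (2 * Real.pi * Complex.I * ((n : ℂ) / p))‖
          ‖∑ n ∈ A, Complex.exp (2 * Real.pi * Complex.I * (2 * (n : ℂ) / p))‖ := by
  obtain ⟨a, rfl⟩ := hI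
  haveI : Fact p.Prime := ⟨hp⟩
  haveI : NeZero p := ⟨hp.pos.ne'⟩
  obtain ⟨m, hm⟩ : ∃ m, p = 2 * m + 1 := hodd
  have hm' : (p - 1) / 2 = m := by omega
  rw [hm'] at hAI
  -- s n : the offset into the complement interval
  set s : ℕ → ℕ := fun n => ((n : ZMod p) - a).val - m with hs_def
  have hsval : ∀ n ∈ A, m + s n = ((n : ZMod p) - a).val ∧ s n ≤ m := by
    intro n hn
    have h1 : m ≤ ((n : ZMod p) - a).val := by
      by_contra hlt
      push_neg at hlt
      apply hAI n hn
      refine Finset.mem_image.2 ⟨((n : ZMod p) - a).val, Finset.mem_range.2 hlt, ?_⟩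
      rw [ZMod.natCast_val, ZMod.cast_id]
      ring
    have h2 : ((n : ZMod p) - a).val < p := ZMod.val_lt _
    have hsn : s n = ((n : ZMod p) - a).val - m := rfl
    constructor <;> omega
  set c : ℕ := a.val + m with hc_def
  have hncong : ∀ n ∈ A, (n : ZMod p) = ((c + s n : ℕ) : ZMod p) := by
    intro n hn
    have h1 := (hsval n hn).1
    have h2 : ((m + s n : ℕ) : ZMod p) = (n : ZMod p) - a := by
      rw [h1, ZMod.natCast_val, ZMod.cast_id]
    push_cast [hc_def]
    rw [ZMod.natCast_val, ZMod.cast_id]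
    push_cast at h2
    linear_combination -h2
  -- angles
  set θ : ℕ → ℝ := fun n => 2 * Real.pi * s n / p with hθ_def
  have hθ0 : ∀ n ∈ A, 0 ≤ θ n := by
    intro n hn
    positivity
  have hθπ : ∀ n ∈ A, θ n ≤ Real.pi := by
    intro n hn
    have hs := (hsval n hn).2
    have hp0 : (0:ℝ) < p := by exact_mod_cast hp.pos
    rw [hθ_def]
    rw [div_le_iff₀ hp0]
    have : (s n : ℝ) ≤ m := by exact_mod_cast hs
    have hπ := Real.pi_pos
    have hpm : (p : ℝ) = 2 * m + 1 := by exact_mod_cast congrArg (Nat.cast : ℕ → ℝ) hm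
    nlinarith
  -- decomposition of exponentials
  set w1 : ℂ := Complex.exp (-(2 * Real.pi * Complex.I * ((c:ℂ) / p))) with hw1
  set w2 : ℂ := Complex.exp (-(2 * Real.pi * Complex.I * ((2*c:ℂ) / p))) with hw2
  have hw1norm : ‖w1‖ = 1 := by
    rw [hw1, Complex.norm_exp]
    simp [mul_comm, mul_assoc, mul_div_assoc]
  have hw2norm : ‖w2‖ = 1 := by
    rw [hw2, Complex.norm_exp]
    simp [mul_comm, mul_assoc, mul_div_assoc]
  have hE1 : ∀ n ∈ A, w1 * Complex.exp (2 * Real.pi * Complex.I * ((n : ℂ) / p))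
      = Complex.exp ((θ n : ℝ) * Complex.I) := by
    intro n hn
    rw [exp_nat_congr p hp.pos (hncong n hn), hw1, ← Complex.exp_add]
    congr 1
    have hp' : (p : ℂ) ≠ 0 := by exact_mod_cast hp.pos.ne'
    rw [hθ_def]
    push_cast
    field_simp
    ring
  have hE2 : ∀ n ∈ A, w2 * Complex.exp (2 * Real.pi * Complex.I * (2 * (n : ℂ) / p))
      = Complex.exp ((2 * θ n : ℝ) * Complex.I) := by
    intro n hn
    have hcong2 : ((2*n : ℕ) : ZMod p) = ((2*(c + s n) : ℕ) : ZMod p) := by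
      push_cast
      rw [hncong n hn]
      push_cast
      ring
    have := exp_nat_congr p hp.pos hcong2
    have h2n : (2 * Real.pi * Complex.I * (((2*n:ℕ) : ℂ) / p)) = 2 * Real.pi * Complex.I * (2 * (n : ℂ) / p) := by
      push_cast; ring
    rw [h2n] at this
    rw [this, hw2, ← Complex.exp_add]
    congr 1
    have hp' : (p : ℂ) ≠ 0 := by exact_mod_cast hp.pos.ne'
    rw [hθ_def]
    push_cast
    field_simp
    ring
  -- key pointwise inequality
  have hpoint : ∀ n ∈ A, (1:ℝ) ≤
      ((-2 * Complex.I) * (w1 * Complex.exp (2 * Real.pi * Complex.I * ((n : ℂ) / p)))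
        + w2 * Complex.exp (2 * Real.pi * Complex.I * (2 * (n : ℂ) / p))).re := by
    intro n hn
    rw [hE1 n hn, hE2 n hn, Complex.add_re, re_neg_two_I_exp, Complex.exp_ofReal_mul_I_re]
    nlinarith [Real.sin_nonneg_of_nonneg_of_le_pi (hθ0 n hn) (hθπ n hn), Real.sin_le_one (θ n),
      Real.cos_two_mul (θ n), Real.sin_sq_add_cos_sq (θ n)]
  -- sum it up
  set S1 := ∑ n ∈ A, Complex.exp (2 * Real.pi * Complex.I * ((n : ℂ) / p)) with hS1
  set S2 := ∑ n ∈ A, Complex.exp (2 * Real.pi * Complex.I * (2 * (n : ℂ) / p)) with hS2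
  have hsum : (A.card : ℝ) ≤ ((-2 * Complex.I) * (w1 * S1) + w2 * S2).re := by
    have : ((-2 * Complex.I) * (w1 * S1) + w2 * S2) =
        ∑ n ∈ A, ((-2 * Complex.I) * (w1 * Complex.exp (2 * Real.pi * Complex.I * ((n : ℂ) / p)))
          + w2 * Complex.exp (2 * Real.pi * Complex.I * (2 * (n : ℂ) / p))) := by
      rw [Finset.sum_add_distrib, ← Finset.mul_sum, ← Finset.mul_sum, ← Finset.mul_sum]
    rw [this, Complex.re_sum]
    calc (A.card : ℝ) = ∑ n ∈ A, (1:ℝ) := by simp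
    _ ≤ _ := Finset.sum_le_sum hpoint
  have hnorm : ((-2 * Complex.I) * (w1 * S1) + w2 * S2).re ≤ 2 * ‖S1‖ + ‖S2‖ := by
    calc ((-2 * Complex.I) * (w1 * S1) + w2 * S2).re
        ≤ ‖(-2 * Complex.I) * (w1 * S1) + w2 * S2‖ := Complex.re_le_norm _
      _ ≤ ‖(-2 * Complex.I) * (w1 * S1)‖ + ‖w2 * S2‖ := norm_add_le _ _
      _ = 2 * ‖S1‖ + ‖S2‖ := by
          simp [norm_mul, hw1norm, hw2norm]
  have hmax1 : ‖S1‖ ≤ max ‖S1‖ ‖S2‖ := le_max_left _ _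
  have hmax2 : ‖S2‖ ≤ max ‖S1‖ ‖S2‖ := le_max_right _ _
  linarith
end

section
/- Let $p$ be an odd prime, let $I_p \subseteq \mathbb{Z}/p\mathbb{Z}$ be an interval of length $(p-1)/2$, and let $N \geq 1$. Suppose $A \subseteq \{1, \dots, N\}$ is a set such that no $a \in A$ has $a \bmod p \in I_p$. Then $|A| \leq 2 \big|\sum_{n \in A} e(n/p)\big| + \big|\sum_{n \in A} e(2n/p)\big|$. -/
/-- The key inequality in the proof of the large Fourier coefficient lemma: if
`A ⊆ {1, …, N}` avoids an interval `I ⊆ ℤ/pℤ` of length `(p-1)/2` modulo the odd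
prime `p`, then `|A| ≤ 2 |∑_{n ∈ A} e(n/p)| + |∑_{n ∈ A} e(2n/p)|`. -/
theorem avoiding_interval_fourier_bound (p : ℕ) (hp : p.Prime) (hodd : Odd p)
    (I : Finset (ZMod p))
    (hI : ∃ a : ZMod p, I = (Finset.range ((p - 1) / 2)).image (fun k : ℕ => a + (k : ZMod p)))
    (N : ℕ) (hN : 1 ≤ N) (A : Finset ℕ) (hA : A ⊆ Finset.Icc 1 N)
    (hAI : ∀ n ∈ A, (n : ZMod p) ∉ I) :
    (A.card : ℝ) ≤
      2 * ‖∑ n ∈ A, Complex.exp (2 * Real.pi * Complex.I * ((n : ℂ) / p))‖ +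
        ‖∑ n ∈ A, Complex.exp (2 * Real.pi * Complex.I * (2 * (n : ℂ) / p))‖ := by
  obtain ⟨a, ha⟩ := hI
  obtain ⟨l, hl⟩ := hodd
  haveI : NeZero p := ⟨hp.ne_zero⟩
  have hp0 : (0:ℝ) < p := by exact_mod_cast hp.pos
  have hp0' : (p:ℝ) ≠ 0 := ne_of_gt hp0
  have hml : (p - 1) / 2 = l := by omega
  set π := Real.pi with hπ
  have hπ0 : 0 < π := Real.pi_pos
  -- The shift
  set t : ℝ := ((p:ℝ) + 1) / 4 - ((a.val : ℝ) + l) with ht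
  set g : ℕ → ℝ := fun n => 2 * π * (((n:ℝ) + t) / p) with hg
  set S₁ := ∑ n ∈ A, Complex.exp (2 * (π:ℂ) * Complex.I * ((n : ℂ) / p)) with hS₁
  set S₂ := ∑ n ∈ A, Complex.exp (2 * (π:ℂ) * Complex.I * (2 * (n : ℂ) / p)) with hS₂
  set u : ℂ := Complex.exp (((2 * π * t / p : ℝ) : ℂ) * Complex.I) with hu
  set v : ℂ := Complex.exp (((2 * π * (2 * t) / p : ℝ) : ℂ) * Complex.I) with hv
  -- pointwise bound
  have key : ∀ n ∈ A, (1:ℝ) ≤ -(2 * Real.cos (g n) + Real.cos (2 * g n)) := by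
    intro n hn
    -- find j
    set k : ℕ := ((n : ZMod p) - a).val with hk
    have hka : a + (k : ZMod p) = (n : ZMod p) := by
      rw [hk, ZMod.natCast_rightInverse ((n : ZMod p) - a)]; ring
    have hkl : l ≤ k := by
      by_contra h
      push_neg at h
      exact hAI n hn (ha ▸ Finset.mem_image.mpr ⟨k, Finset.mem_range.mpr (hml ▸ h), hka⟩)
    have hkp : k < p := ZMod.val_lt _
    set j : ℕ := k - l with hj
    have hjk : k = l + j := by omega
    have hjl : j ≤ l := by omega
    -- integer congruence
    have hcong : (n : ZMod p) = ((a.val + k : ℕ) : ZMod p) := by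
      rw [Nat.cast_add, ZMod.natCast_rightInverse a, hka]
    have hmod : n ≡ a.val + k [MOD p] := (ZMod.natCast_eq_natCast_iff _ _ _).mp hcong
    obtain ⟨q, hq⟩ := (Nat.modEq_iff_dvd).mp hmod
    -- real form of n
    have hnr : (n : ℝ) = (a.val : ℝ) + k - p * q := by
      have := congrArg (fun z : ℤ => (z : ℝ)) hq
      push_cast at this
      linarith
    have hkr : (k : ℝ) = l + j := by exact_mod_cast congrArg (Nat.cast : ℕ → ℝ) hjk
    have hgn : g n = (2 * π * j / p + π / (2 * p) + π / 2) + ((-q : ℤ) : ℝ) * (2 * π) := by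
      rw [hg]
      simp only
      rw [hnr, ht, hkr]
      field_simp
      push_cast; ring
    have hcos : Real.cos (g n) ≤ 0 := by
      rw [hgn, Real.cos_add_int_mul_two_pi, Real.cos_add_pi_div_two]
      have hy0 : 0 ≤ 2 * π * j / p + π / (2 * p) := by positivity
      have hyπ : 2 * π * j / p + π / (2 * p) ≤ π := by
        have h1 : (4 * (j:ℝ) + 1) ≤ 2 * p := by
          have : 4 * j + 1 ≤ 2 * p := by omega
          exact_mod_cast this
        have h2 : 2 * π * j / p + π / (2 * p) = π * (4 * j + 1) / (2 * p) := by
          field_simp; ring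
        rw [h2, div_le_iff₀ (by positivity)]
        nlinarith
      simpa using Real.sin_nonneg_of_nonneg_of_le_pi hy0 hyπ
    have h1 := Real.neg_one_le_cos (g n)
    rw [Real.cos_two_mul]
    nlinarith
  -- sums of cosines as real parts
  have hB1 : ∑ n ∈ A, Real.cos (g n) = (u * S₁).re := by
    rw [hS₁, Finset.mul_sum, Complex.re_sum]
    refine Finset.sum_congr rfl fun n hn => ?_
    rw [hu, ← Complex.exp_add]
    have : ((2 * π * t / p : ℝ) : ℂ) * Complex.I + 2 * (π:ℂ) * Complex.I * ((n:ℂ) / p)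
        = ((g n : ℝ) : ℂ) * Complex.I := by
      rw [hg]
      push_cast
      have : (p : ℂ) ≠ 0 := by exact_mod_cast hp0'
      field_simp
      ring
    rw [this, Complex.exp_ofReal_mul_I_re]
  have hB2 : ∑ n ∈ A, Real.cos (2 * g n) = (v * S₂).re := by
    rw [hS₂, Finset.mul_sum, Complex.re_sum]
    refine Finset.sum_congr rfl fun n hn => ?_
    rw [hv, ← Complex.exp_add]
    have : ((2 * π * (2 * t) / p : ℝ) : ℂ) * Complex.I
        + 2 * (π:ℂ) * Complex.I * (2 * (n:ℂ) / p) = ((2 * g n : ℝ) : ℂ) * Complex.I := by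
      rw [hg]
      push_cast
      have : (p : ℂ) ≠ 0 := by exact_mod_cast hp0'
      field_simp
      ring
    rw [this, Complex.exp_ofReal_mul_I_re]
  have hnormu : ‖u * S₁‖ = ‖S₁‖ := by
    rw [norm_mul, hu,
      Complex.norm_exp_ofReal_mul_I, one_mul]
  have hnormv : ‖v * S₂‖ = ‖S₂‖ := by
    rw [norm_mul, hv,
      Complex.norm_exp_ofReal_mul_I, one_mul]
  have habs1 : -(u * S₁).re ≤ ‖S₁‖ := by
    rw [← hnormu]
    exact (neg_le_abs _).trans (Complex.abs_re_le_norm _)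
  have habs2 : -(v * S₂).re ≤ ‖S₂‖ := by
    rw [← hnormv]
    exact (neg_le_abs _).trans (Complex.abs_re_le_norm _)
  calc (A.card : ℝ) = ∑ _n ∈ A, (1:ℝ) := by simp
    _ ≤ ∑ n ∈ A, -(2 * Real.cos (g n) + Real.cos (2 * g n)) := Finset.sum_le_sum key
    _ = -(2 * ∑ n ∈ A, Real.cos (g n) + ∑ n ∈ A, Real.cos (2 * g n)) := by
        rw [Finset.mul_sum, ← Finset.sum_add_distrib, ← Finset.sum_neg_distrib]
    _ = 2 * (-(u * S₁).re) + (-(v * S₂).re) := by rw [hB1, hB2]; ring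
    _ ≤ 2 * ‖S₁‖ + ‖S₂‖ := by
        have := habs1; have := habs2; nlinarith [habs1, habs2]
end

section
/- Fix an integer $r \geq 1$, and assume the following exponential sum bound: for every $\varepsilon > 0$ there is $C = C(\varepsilon, r)$ such that for every integer $X \geq 1$ and every real $\xi$ with $X^2 \leq |\xi| \leq X^{r+1}$, one has $\big| \sum_{X \leq x < 2X} e(\xi/x) \big| \leq C X^{1/2 + \varepsilon}$, the sum being over integers $x$ with $X \leq x < 2X$. Then for every $\varepsilon > 0$ there is $C' = C'(\varepsilon, r)$ such that for every integer $X \geq 1$, the number of $2r$-tuples of integers $(x_1, \dots, x_{2r})$ with $X \leq x_i < 2X$ for all $i$ and $\big| \frac{1}{x_1} + \dots + \frac{1}{x_r} - \frac{1}{x_{r+1}} - \dots - \frac{1}{x_{2r}} \big| \leq X^{-(r+1)}$ is at most $C' X^{r + \varepsilon}$. -/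
open Finset MeasureTheory intervalIntegral

noncomputable section

namespace SpacingAux




def expS (X : ℕ) (ξ : ℝ) : ℂ :=
  ∑ x ∈ Finset.Ico X (2 * X), Complex.exp (2 * Real.pi * Complex.I * ((ξ : ℂ) / x))

def tv (r : ℕ) (x : Fin (2 * r) → ℕ) : ℝ :=
  ∑ i : Fin (2 * r), (if (i : ℕ) < r then (1 : ℝ) else -1) / (x i : ℝ)

def Ff (r X : ℕ) (ζ : ℝ) : ℝ := ‖expS X ζ‖ ^ (2 * r)

lemma card_filter_lt (r : ℕ) :
    ((Finset.univ : Finset (Fin (2 * r))).filter fun i : Fin (2 * r) => (i : ℕ) < r).card = r := by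
  have h : ∀ m ∈ Finset.range r, m < 2 * r := fun m hm => by
    simp only [Finset.mem_range] at hm; omega
  have : ((Finset.univ : Finset (Fin (2 * r))).filter fun i : Fin (2 * r) => (i : ℕ) < r) =
      (Finset.range r).attachFin h := by
    ext i
    simp [Finset.mem_attachFin]
  rw [this, Finset.card_attachFin, Finset.card_range]

lemma cos_sum_eq (r X : ℕ) (ζ : ℝ) :
    ∑ x ∈ Fintype.piFinset (fun _ : Fin (2 * r) => Finset.Ico X (2 * X)),
      Real.cos (2 * Real.pi * (ζ * tv r x)) = Ff r X ζ := by
  have key : ∑ x ∈ Fintype.piFinset (fun _ : Fin (2 * r) => Finset.Ico X (2 * X)),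
      Complex.exp (((2 * Real.pi * (ζ * tv r x) : ℝ) : ℂ) * Complex.I)
      = ((Ff r X ζ : ℝ) : ℂ) := by
    have hx : ∀ x : Fin (2 * r) → ℕ,
        Complex.exp (((2 * Real.pi * (ζ * tv r x) : ℝ) : ℂ) * Complex.I)
        = ∏ i : Fin (2 * r), Complex.exp
            (((2 * Real.pi * (ζ * ((if (i : ℕ) < r then (1 : ℝ) else -1) / (x i : ℝ))) : ℝ) : ℂ)
              * Complex.I) := by
      intro x
      rw [← Complex.exp_sum]
      congr 1
      rw [← Finset.sum_mul, ← Complex.ofReal_sum]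
      congr 2
      rw [tv, Finset.mul_sum, Finset.mul_sum]
    simp only [hx]
    rw [← Finset.prod_univ_sum (fun _ : Fin (2 * r) => Finset.Ico X (2 * X))
      (fun i n => Complex.exp
        (((2 * Real.pi * (ζ * ((if (i : ℕ) < r then (1 : ℝ) else -1) / (n : ℝ))) : ℝ) : ℂ)
          * Complex.I))]
    set SP := ∑ n ∈ Finset.Ico X (2 * X),
      Complex.exp (((2 * Real.pi * (ζ * ((1 : ℝ) / (n : ℝ))) : ℝ) : ℂ) * Complex.I) with hSP
    set SQ := ∑ n ∈ Finset.Ico X (2 * X),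
      Complex.exp (((2 * Real.pi * (ζ * ((-1 : ℝ) / (n : ℝ))) : ℝ) : ℂ) * Complex.I) with hSQ
    have hite : ∀ i : Fin (2 * r), (∑ n ∈ Finset.Ico X (2 * X),
        Complex.exp (((2 * Real.pi * (ζ * ((if (i : ℕ) < r then (1 : ℝ) else -1) / (n : ℝ))) : ℝ) : ℂ)
          * Complex.I)) = if (i : ℕ) < r then SP else SQ := by
      intro i
      split_ifs with h
      · simp [h, hSP]
      · simp [h, hSQ]
    rw [Finset.prod_congr rfl fun i _ => hite i, Finset.prod_ite, Finset.prod_const,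
      Finset.prod_const, card_filter_lt]
    have hcrd : ((Finset.univ : Finset (Fin (2 * r))).filter fun i : Fin (2 * r) => ¬ (i : ℕ) < r).card = r := by
      have := Finset.card_filter_add_card_filter_not
        (s := (Finset.univ : Finset (Fin (2 * r)))) (p := fun i => (i : ℕ) < r)
      simp only [Finset.card_univ, Fintype.card_fin, card_filter_lt] at this
      omega
    rw [hcrd]
    have hP : SP = expS X ζ := by
      rw [hSP, expS]
      refine Finset.sum_congr rfl fun n _ => ?_
      congr 1
      push_cast
      ring
    have hQ : SQ = (starRingEnd ℂ) (expS X ζ) := by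
      rw [hSQ, expS, map_sum]
      refine Finset.sum_congr rfl fun n _ => ?_
      rw [← Complex.exp_conj]
      congr 1
      simp only [map_mul, map_div₀, Complex.conj_I, Complex.conj_ofReal, map_ofNat,
        Complex.conj_natCast]
      push_cast
      ring
    rw [hP, hQ, ← mul_pow, Complex.mul_conj, ← Complex.ofReal_pow]
    congr 1
    rw [Ff, Complex.normSq_eq_norm_sq, pow_mul]
  have := congrArg Complex.re key
  rw [Complex.re_sum] at this
  simp only [Complex.exp_ofReal_mul_I_re, Complex.ofReal_re] at this
  exact this





def m0 (A t : ℝ) : ℝ := if t = 0 then 2 * A else min (2 * A) (1 / (Real.pi * |t|))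

lemma m0_nonneg {A : ℝ} (hA : 0 ≤ A) (t : ℝ) : 0 ≤ m0 A t := by
  rw [m0]
  split_ifs with h
  · linarith
  · refine le_min (by linarith) ?_
    positivity

lemma cos_int_lower (T t : ℝ) (hT : 0 < T) (ht : |t| ≤ 1 / (4 * T)) :
    T / 2 ≤ ∫ ξ in (0:ℝ)..T, Real.cos (2 * Real.pi * (ξ * t)) := by
  have h1 : ∀ ξ ∈ Set.Icc (0:ℝ) T,
      1 - (2 * Real.pi * t) ^ 2 / 2 * ξ ^ 2 ≤ Real.cos (2 * Real.pi * (ξ * t)) := by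
    intro ξ _
    have h := Real.one_sub_sq_div_two_le_cos (x := 2 * Real.pi * (ξ * t))
    nlinarith [h]
  have h2 : (∫ ξ in (0:ℝ)..T, (1 - (2 * Real.pi * t) ^ 2 / 2 * ξ ^ 2))
      ≤ ∫ ξ in (0:ℝ)..T, Real.cos (2 * Real.pi * (ξ * t)) := by
    refine intervalIntegral.integral_mono_on hT.le ?_ ?_ h1
    · exact (by fun_prop : Continuous fun ξ : ℝ => 1 - (2 * Real.pi * t) ^ 2 / 2 * ξ ^ 2).intervalIntegrable _ _
    · exact (by fun_prop : Continuous fun ξ : ℝ => Real.cos (2 * Real.pi * (ξ * t))).intervalIntegrable _ _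
  have h3 : (∫ ξ in (0:ℝ)..T, (1 - (2 * Real.pi * t) ^ 2 / 2 * ξ ^ 2))
      = T - (2 * Real.pi * t) ^ 2 / 2 * (T ^ 3 / 3) := by
    rw [intervalIntegral.integral_sub ((by fun_prop : Continuous fun _ : ℝ => (1:ℝ)).intervalIntegrable _ _)
      ((by fun_prop : Continuous fun ξ : ℝ => (2 * Real.pi * t) ^ 2 / 2 * ξ ^ 2).intervalIntegrable _ _),
      intervalIntegral.integral_const, intervalIntegral.integral_const_mul, integral_pow]
    norm_num
  have hπ : Real.pi < 3.15 := Real.pi_lt_d2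
  have hπ0 : 0 < Real.pi := Real.pi_pos
  have ht2 : t ^ 2 ≤ 1 / (16 * T ^ 2) := by
    have := abs_nonneg t
    have h4T : (0:ℝ) < 4 * T := by linarith
    have : t ^ 2 = |t| ^ 2 := (sq_abs t).symm
    rw [this]
    have h' : |t| ^ 2 ≤ (1 / (4 * T)) ^ 2 := by
      apply pow_le_pow_left₀ (abs_nonneg t) ht
    calc |t| ^ 2 ≤ (1 / (4 * T)) ^ 2 := h'
      _ = 1 / (16 * T ^ 2) := by field_simp; ring
  have : (2 * Real.pi * t) ^ 2 / 2 * (T ^ 3 / 3) ≤ T / 2 := by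
    have hT2 : 0 < T ^ 2 := by positivity
    have expand : (2 * Real.pi * t) ^ 2 / 2 * (T ^ 3 / 3) = (2 * Real.pi ^ 2 / 3) * (t ^ 2 * T ^ 2) * T := by ring
    rw [expand]
    have h1' : t ^ 2 * T ^ 2 ≤ 1 / 16 := by
      calc t ^ 2 * T ^ 2 ≤ 1 / (16 * T ^ 2) * T ^ 2 := by
            apply mul_le_mul_of_nonneg_right ht2 hT2.le
        _ = 1 / 16 := by field_simp
    have hπ2 : Real.pi ^ 2 < 9.9225 := by nlinarith [hπ, hπ0]
    have A1 := mul_le_mul_of_nonneg_left (mul_le_mul_of_nonneg_right h1' hT.le)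
      (by positivity : (0:ℝ) ≤ 2 * Real.pi ^ 2 / 3)
    rw [mul_assoc]
    calc 2 * Real.pi ^ 2 / 3 * (t ^ 2 * T ^ 2 * T) ≤ 2 * Real.pi ^ 2 / 3 * (1 / 16 * T) := A1
      _ ≤ T / 2 := by linarith [mul_le_mul_of_nonneg_right hπ2.le hT.le]
  linarith [h2, h3.symm.le]

lemma cos_int_upper (A t l u ξ : ℝ) (hlu : l ≤ u) (hA : u - l ≤ 2 * A) :
    |∫ η in l..u, Real.cos (2 * Real.pi * ((ξ - η) * t))| ≤ m0 A t := by
  have hb : |∫ η in l..u, Real.cos (2 * Real.pi * ((ξ - η) * t))| ≤ 2 * A := by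
    have h := intervalIntegral.norm_integral_le_of_norm_le_const (C := 1)
      (f := fun η => Real.cos (2 * Real.pi * ((ξ - η) * t))) (a := l) (b := u)
      (fun x _ => by rw [Real.norm_eq_abs]; exact Real.abs_cos_le_one _)
    rw [Real.norm_eq_abs] at h
    have : |u - l| = u - l := abs_of_nonneg (by linarith)
    rw [this] at h
    linarith
  by_cases ht : t = 0
  · rw [m0, if_pos ht]; exact hb
  · rw [m0, if_neg ht]
    refine le_min hb ?_
    have hcomp : (∫ η in l..u, Real.cos (2 * Real.pi * ((ξ - η) * t)))
        = ∫ η in l..u, (fun z => Real.cos ((2 * Real.pi * t) * z)) (ξ - η) := by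
      refine intervalIntegral.integral_congr fun η _ => ?_
      simp only
      congr 1
      ring
    rw [hcomp, intervalIntegral.integral_comp_sub_left (fun z => Real.cos ((2 * Real.pi * t) * z)) ξ]
    have hc0 : (2 * Real.pi * t) ≠ 0 := by
      have := Real.pi_pos
      intro h0
      apply ht
      nlinarith [h0]
    rw [intervalIntegral.integral_comp_mul_left Real.cos hc0, integral_cos]
    rw [smul_eq_mul, abs_mul, abs_inv]
    have habs : |2 * Real.pi * t| = 2 * Real.pi * |t| := by
      rw [abs_mul]
      rw [abs_of_pos (by positivity : (0:ℝ) < 2 * Real.pi)]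
    rw [habs]
    have h2 : |Real.sin (2 * Real.pi * t * (ξ - l)) - Real.sin (2 * Real.pi * t * (ξ - u))| ≤ 2 := by
      have := Real.abs_sin_le_one (2 * Real.pi * t * (ξ - l))
      have := Real.abs_sin_le_one (2 * Real.pi * t * (ξ - u))
      calc |Real.sin (2 * Real.pi * t * (ξ - l)) - Real.sin (2 * Real.pi * t * (ξ - u))|
          ≤ |Real.sin (2 * Real.pi * t * (ξ - l))| + |Real.sin (2 * Real.pi * t * (ξ - u))| := abs_sub _ _
        _ ≤ 2 := by linarith
    have hpt : (0:ℝ) < 2 * Real.pi * |t| := by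
      have := Real.pi_pos
      have : 0 < |t| := abs_pos.mpr ht
      positivity
    calc (2 * Real.pi * |t|)⁻¹ * |Real.sin (2 * Real.pi * t * (ξ - l)) - Real.sin (2 * Real.pi * t * (ξ - u))|
        ≤ (2 * Real.pi * |t|)⁻¹ * 2 := by
          apply mul_le_mul_of_nonneg_left h2 (by positivity)
      _ = 1 / (Real.pi * |t|) := by
          field_simp







def w1 (j : ℤ) : ℝ := (max 1 (j : ℝ))⁻¹

def dj (j : ℤ) : ℤ := if 0 ≤ j then j else -(j + 1)

lemma w1_nonneg (j : ℤ) : 0 ≤ w1 j := by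
  rw [w1]
  positivity

lemma w1_mono {j k : ℤ} (h : j ≤ k) : w1 k ≤ w1 j := by
  rw [w1, w1]
  apply inv_anti₀
  · exact lt_of_lt_of_le one_pos (le_max_left _ _)
  · exact max_le_max le_rfl (by exact_mod_cast h)

lemma Hsum (N : ℕ) : ∑ j ∈ Finset.Icc (0:ℤ) (N:ℤ), w1 j ≤ 2 + Real.log N := by
  have hre : ∑ j ∈ Finset.Icc (0:ℤ) (N:ℤ), w1 j
      = ∑ n ∈ Finset.range (N+1), w1 (n : ℤ) := by
    refine Finset.sum_nbij' (fun j => j.toNat) (fun n => (n : ℤ)) ?_ ?_ ?_ ?_ ?_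
    · intro j hj
      simp only [Finset.mem_Icc] at hj
      simp only [Finset.mem_range]
      omega
    · intro n hn
      simp only [Finset.mem_range] at hn
      simp only [Finset.mem_Icc]
      omega
    · intro j hj
      simp only [Finset.mem_Icc] at hj
      show ((j.toNat : ℤ)) = j
      omega
    · intro n _
      show (((n:ℤ)).toNat) = n
      omega
    · intro j hj
      simp only [Finset.mem_Icc] at hj
      show w1 j = w1 ((j.toNat : ℤ))
      congr 1
      omega
  rw [hre, Finset.sum_range_succ']
  have h0 : w1 ((0:ℕ) : ℤ) = 1 := by
    simp [w1]
  rw [h0]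
  have hsum : ∑ i ∈ Finset.range N, w1 ((i + 1 : ℕ) : ℤ) = ((harmonic N : ℚ) : ℝ) := by
    rw [harmonic]
    push_cast
    refine Finset.sum_congr rfl fun i _ => ?_
    rw [w1, max_eq_right (by push_cast; linarith [Nat.cast_nonneg (α := ℝ) i] :
      (1:ℝ) ≤ (((i:ℤ) + 1 : ℤ) : ℝ))]
    push_cast
    ring
  rw [hsum]
  linarith [harmonic_le_one_add_log N]

lemma shiftSum (N : ℕ) (b : ℤ) (hb : 0 ≤ b) :
    ∑ j ∈ Finset.Icc b (b + (N:ℤ)), w1 j ≤ ∑ k ∈ Finset.Icc (0:ℤ) (N:ℤ), w1 k := by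
  have : Finset.Icc b (b + (N:ℤ)) = (Finset.Icc (0:ℤ) (N:ℤ)).map (addLeftEmbedding b) := by
    rw [Finset.map_add_left_Icc]
    congr 1
    omega
  rw [this, Finset.sum_map]
  refine Finset.sum_le_sum fun k hk => ?_
  simp only [Finset.mem_Icc] at hk
  exact w1_mono (by simpa [addLeftEmbedding] using by omega : k ≤ b + k)

lemma window_w1 (N : ℕ) (j₀ : ℤ) :
    ∑ j ∈ Finset.Icc j₀ (j₀ + (N:ℤ)), w1 (dj j) ≤ 2 * (2 + Real.log N) := by
  classical
  rw [← Finset.sum_filter_add_sum_filter_not (Finset.Icc j₀ (j₀ + (N:ℤ))) (fun j => 0 ≤ j)]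
  have hpos : ∑ j ∈ (Finset.Icc j₀ (j₀ + (N:ℤ))).filter (fun j => 0 ≤ j), w1 (dj j)
      ≤ 2 + Real.log N := by
    have heq : ∀ j ∈ (Finset.Icc j₀ (j₀ + (N:ℤ))).filter (fun j => 0 ≤ j), w1 (dj j) = w1 j := by
      intro j hj
      simp only [Finset.mem_filter] at hj
      rw [dj, if_pos hj.2]
    rw [Finset.sum_congr rfl heq]
    have hsub : (Finset.Icc j₀ (j₀ + (N:ℤ))).filter (fun j => 0 ≤ j)
        ⊆ Finset.Icc (max j₀ 0) (max j₀ 0 + (N:ℤ)) := by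
      intro j hj
      simp only [Finset.mem_filter, Finset.mem_Icc] at hj ⊢
      omega
    calc ∑ j ∈ (Finset.Icc j₀ (j₀ + (N:ℤ))).filter (fun j => 0 ≤ j), w1 j
        ≤ ∑ j ∈ Finset.Icc (max j₀ 0) (max j₀ 0 + (N:ℤ)), w1 j :=
          Finset.sum_le_sum_of_subset_of_nonneg hsub (fun j _ _ => w1_nonneg j)
      _ ≤ ∑ k ∈ Finset.Icc (0:ℤ) (N:ℤ), w1 k := shiftSum N _ (le_max_right _ _)
      _ ≤ 2 + Real.log N := Hsum N
  have hneg : ∑ j ∈ (Finset.Icc j₀ (j₀ + (N:ℤ))).filter (fun j => ¬ 0 ≤ j), w1 (dj j)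
      ≤ 2 + Real.log N := by
    set e₀ : ℤ := max 0 (-(j₀ + (N:ℤ)) - 1) with he₀
    have himg : ∑ j ∈ (Finset.Icc j₀ (j₀ + (N:ℤ))).filter (fun j => ¬ 0 ≤ j), w1 (dj j)
        = ∑ k ∈ ((Finset.Icc j₀ (j₀ + (N:ℤ))).filter (fun j => ¬ 0 ≤ j)).image
            (fun j => -(j+1)), w1 k := by
      rw [Finset.sum_image (by intro x _ y _ h; have h' : -(x+1) = -(y+1) := h; omega)]
      refine Finset.sum_congr rfl fun j hj => ?_
      simp only [Finset.mem_filter] at hj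
      rw [dj, if_neg hj.2]
    rw [himg]
    have hsub : ((Finset.Icc j₀ (j₀ + (N:ℤ))).filter (fun j => ¬ 0 ≤ j)).image (fun j => -(j+1))
        ⊆ Finset.Icc e₀ (e₀ + (N:ℤ)) := by
      intro k hk
      simp only [Finset.mem_image, Finset.mem_filter, Finset.mem_Icc] at hk
      obtain ⟨j, ⟨⟨hj1, hj2⟩, hj3⟩, rfl⟩ := hk
      have h1 : (0:ℤ) ≤ e₀ := by rw [he₀]; exact le_max_left _ _
      have h2 : -(j₀ + (N:ℤ)) - 1 ≤ e₀ := by rw [he₀]; exact le_max_right _ _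
      have h3 := max_choice (0:ℤ) (-(j₀ + (N:ℤ)) - 1)
      rw [← he₀] at h3
      simp only [Finset.mem_Icc]
      rcases h3 with h3 | h3 <;> omega
    calc ∑ k ∈ ((Finset.Icc j₀ (j₀ + (N:ℤ))).filter (fun j => ¬ 0 ≤ j)).image (fun j => -(j+1)), w1 k
        ≤ ∑ k ∈ Finset.Icc e₀ (e₀ + (N:ℤ)), w1 k :=
          Finset.sum_le_sum_of_subset_of_nonneg hsub (fun k _ _ => w1_nonneg k)
      _ ≤ ∑ k ∈ Finset.Icc (0:ℤ) (N:ℤ), w1 k := shiftSum N _ (le_max_left _ _)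
      _ ≤ 2 + Real.log N := Hsum N
  linarith





lemma m0_le_two_mul {A : ℝ} (hA : 0 ≤ A) (t : ℝ) : m0 A t ≤ 2 * A := by
  rw [m0]; split_ifs
  · exact le_rfl
  · exact min_le_left _ _

set_option maxHeartbeats 1000000 in
lemma fiber_sum (X : ℕ) (hX : 1 ≤ X) (a : ℝ) :
    ∑ n ∈ Finset.Ico X (2 * X), m0 ((X:ℝ)^2) (1 / (n:ℝ) + a)
      ≤ 50 * (X:ℝ)^2 * (1 + Real.log X) := by
  have hπ : (3:ℝ) < Real.pi := Real.pi_gt_three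
  have hπ0 : (0:ℝ) < Real.pi := by linarith
  set Y : ℝ := (X:ℝ) with hYdef
  clear_value Y
  have hY : 1 ≤ Y := by rw [hYdef]; exact_mod_cast hX
  have hY0 : 0 < Y := by linarith
  set q : ℕ → ℤ := fun n => ⌊4*Y^2*(1/(n:ℝ) + a)⌋ with hq
  set j₀ : ℤ := ⌊4*Y^2*(1/(2*Y) + a)⌋ with hj₀
  clear_value q j₀
  set wX : ℤ → ℝ :=
    fun j => (if j = 0 ∨ j = -1 then 2*Y^2 else 0) + (4*Y^2/Real.pi) * w1 (dj j) with hwX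
  clear_value wX
  have hwX0 : ∀ j, 0 ≤ wX j := by
    intro j
    simp only [hwX]
    have := w1_nonneg (dj j)
    have h2 : (0:ℝ) ≤ (4*Y^2/Real.pi) * w1 (dj j) := by positivity
    split_ifs with h
    · positivity
    · simpa using h2
  have hbnd : ∀ n ∈ Finset.Ico X (2*X), (0:ℝ) < (n:ℝ) ∧ Y ≤ (n:ℝ) ∧ (n:ℝ) < 2*Y := by
    intro n hn
    simp only [Finset.mem_Ico] at hn
    refine ⟨?_, ?_, ?_⟩
    · have : (1:ℝ) ≤ (n:ℝ) := by exact_mod_cast le_trans hX hn.1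
      linarith
    · rw [hYdef]; exact_mod_cast hn.1
    · rw [hYdef]; push_cast; exact_mod_cast hn.2
  -- strict monotone decreasing
  have hmono : ∀ n ∈ Finset.Ico X (2*X), ∀ n' ∈ Finset.Ico X (2*X), n < n' → q n' < q n := by
    intro n hn n' hn' hlt
    obtain ⟨hn0, hnY, hn2Y⟩ := hbnd n hn
    obtain ⟨hn0', hnY', hn2Y'⟩ := hbnd n' hn'
    have hprod : (n:ℝ) * (n':ℝ) < 4*Y^2 := by nlinarith
    have hprod0 : (0:ℝ) < (n:ℝ) * (n':ℝ) := by positivity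
    have hd : 1/(n:ℝ) - 1/(n':ℝ) = ((n':ℝ) - (n:ℝ))/((n:ℝ)*(n':ℝ)) := by
      field_simp
    have hnn' : (1:ℝ) ≤ (n':ℝ) - (n:ℝ) := by
      have : (n:ℝ) + 1 ≤ (n':ℝ) := by exact_mod_cast Nat.succ_le_of_lt hlt
      linarith
    have h2 : 1/((n:ℝ)*(n':ℝ)) ≤ 1/(n:ℝ) - 1/(n':ℝ) := by
      rw [hd]; gcongr
    have h3 : 1/(4*Y^2) < 1/((n:ℝ)*(n':ℝ)) :=
      one_div_lt_one_div_of_lt hprod0 hprod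
    have hgap : 4*Y^2*(1/(n':ℝ) + a) + 1 ≤ 4*Y^2*(1/(n:ℝ) + a) := by
      have h4 : (1:ℝ) < 4*Y^2*(1/(n:ℝ) - 1/(n':ℝ)) := by
        have h5 : 4*Y^2*(1/(4*Y^2)) < 4*Y^2*(1/((n:ℝ)*(n':ℝ))) := by
          apply mul_lt_mul_of_pos_left h3 (by positivity)
        have h6 : 4*Y^2*(1/(4*Y^2)) = 1 := by
          field_simp
        nlinarith [mul_le_mul_of_nonneg_left h2 (by positivity : (0:ℝ) ≤ 4*Y^2)]
      nlinarith
    have hfl := Int.floor_le_floor hgap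
    rw [Int.floor_add_one] at hfl
    simp only [hq, hj₀]
    omega

  have hinj : ∀ n ∈ Finset.Ico X (2*X), ∀ n' ∈ Finset.Ico X (2*X), q n = q n' → n = n' := by
    intro n hn n' hn' hqe
    rcases lt_trichotomy n n' with h | h | h
    · exact absurd hqe (by have := hmono n hn n' hn' h; omega)
    · exact h
    · exact absurd hqe (by have := hmono n' hn' n hn h; omega)
  have hrange : ∀ n ∈ Finset.Ico X (2*X), q n ∈ Finset.Icc j₀ (j₀ + ((2*X : ℕ) : ℤ)) := by
    intro n hn
    obtain ⟨hn0, hnY, hn2Y⟩ := hbnd n hn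
    simp only [Finset.mem_Icc]
    constructor
    · simp only [hq, hj₀]
      apply Int.floor_le_floor
      have : 1/(2*Y) ≤ 1/(n:ℝ) := by
        apply one_div_le_one_div_of_le hn0 hn2Y.le
      nlinarith
    · have harg : 4*Y^2*(1/(n:ℝ) + a) ≤ 4*Y^2*(1/(2*Y) + a) + ((2*X:ℕ):ℝ) := by
        have h1 : 1/(n:ℝ) ≤ 1/Y := one_div_le_one_div_of_le hY0 hnY
        have h2 : ((2*X:ℕ):ℝ) = 2*Y := by rw [hYdef]; push_cast; ring
        rw [h2]
        have h3 : 4*Y^2*(1/Y + a) = 4*Y^2*(1/(2*Y) + a) + 2*Y := by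
          field_simp
          ring
        nlinarith
      have hfl := Int.floor_le_floor harg
      rw [Int.floor_add_natCast] at hfl
      simp only [hq, hj₀]
      exact_mod_cast hfl
  have hper : ∀ n ∈ Finset.Ico X (2*X), m0 (Y^2) (1/(n:ℝ) + a) ≤ wX (q n) := by
    intro n hn
    obtain ⟨hn0, hnY, hn2Y⟩ := hbnd n hn
    set t : ℝ := 1/(n:ℝ) + a with htdef
    clear_value t
    have hfl : ((q n : ℤ) : ℝ) ≤ 4*Y^2*t := by
      simp only [hq]
      rw [htdef]
      exact Int.floor_le _
    have hfl2 : 4*Y^2*t < (q n : ℤ) + 1 := by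
      simp only [hq]
      rw [htdef]
      exact Int.lt_floor_add_one _
    by_cases hj : q n = 0 ∨ q n = -1
    · simp only [hwX, if_pos hj]
      have := w1_nonneg (dj (q n))
      have h2 : (0:ℝ) ≤ (4*Y^2/Real.pi) * w1 (dj (q n)) := by positivity
      have := m0_le_two_mul (by positivity : (0:ℝ) ≤ Y^2) t
      linarith
    · simp only [hwX, if_neg hj, zero_add]
      push_neg at hj
      have hd1 : 1 ≤ dj (q n) := by
        rw [dj]; split_ifs with h <;> omega
      have habs : (dj (q n) : ℝ)/(4*Y^2) ≤ |t| := by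
        rw [dj]
        split_ifs with h
        · -- q n ≥ 1, t > 0
          have hq1 : (1:ℤ) ≤ q n := by omega
          have ht0 : (1:ℝ)/(4*Y^2) ≤ t := by
            have h1R : (1:ℝ) ≤ ((q n : ℤ):ℝ) := by exact_mod_cast hq1
            have h4 : (1:ℝ) ≤ 4*Y^2*t := by linarith
            rw [div_le_iff₀ (by positivity : (0:ℝ) < 4*Y^2)]
            linarith
          have ht0' : 0 < t := lt_of_lt_of_le (by positivity) ht0
          rw [abs_of_pos ht0', div_le_iff₀ (by positivity : (0:ℝ) < 4*Y^2)]
          have : ((q n : ℤ):ℝ) ≤ 4*Y^2*t := hfl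
          linarith
        · -- q n ≤ -2, t < 0
          have hq2 : q n ≤ -2 := by omega
          have h5 : 4*Y^2*t < -1 := by
            have : ((q n : ℤ):ℝ) + 1 ≤ -1 := by
              have : ((q n : ℤ):ℝ) ≤ -2 := by exact_mod_cast hq2
              linarith
            linarith
          have ht0 : t < 0 := by
            by_contra hcon
            push_neg at hcon
            have := mul_nonneg (by positivity : (0:ℝ) ≤ 4*Y^2) hcon
            linarith
          rw [abs_of_neg ht0, div_le_iff₀ (by positivity : (0:ℝ) < 4*Y^2)]
          have h6 : ((-(q n + 1) : ℤ):ℝ) = -(((q n : ℤ):ℝ) + 1) := by push_cast; ring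
          rw [h6]
          linarith
      have hdpos : (0:ℝ) < (dj (q n) : ℝ) := by exact_mod_cast lt_of_lt_of_le zero_lt_one hd1
      have ht0 : t ≠ 0 := by
        intro h0
        rw [h0, abs_zero] at habs
        have : (0:ℝ) < (dj (q n) : ℝ)/(4*Y^2) := by positivity
        linarith
      rw [m0, if_neg ht0]
      refine le_trans (min_le_right _ _) ?_
      have hw1 : w1 (dj (q n)) = ((dj (q n) : ℝ))⁻¹ := by
        rw [w1, max_eq_right (by exact_mod_cast hd1)]
      rw [hw1]
      have h5 : Real.pi * ((dj (q n) : ℝ)/(4*Y^2)) ≤ Real.pi * |t| := by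
        apply mul_le_mul_of_nonneg_left habs hπ0.le
      have h6 : (0:ℝ) < Real.pi * ((dj (q n) : ℝ)/(4*Y^2)) := by positivity
      calc 1/(Real.pi * |t|) ≤ 1/(Real.pi * ((dj (q n) : ℝ)/(4*Y^2))) :=
            one_div_le_one_div_of_le h6 h5
        _ = (4*Y^2/Real.pi) * ((dj (q n) : ℝ))⁻¹ := by
            field_simp
  -- assembly
  calc ∑ n ∈ Finset.Ico X (2*X), m0 (Y^2) (1/(n:ℝ) + a)
      ≤ ∑ n ∈ Finset.Ico X (2*X), wX (q n) := Finset.sum_le_sum hper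
    _ = ∑ j ∈ (Finset.Ico X (2*X)).image q, wX j := (Finset.sum_image hinj).symm
    _ ≤ ∑ j ∈ Finset.Icc j₀ (j₀ + ((2*X:ℕ):ℤ)), wX j := by
        apply Finset.sum_le_sum_of_subset_of_nonneg
        · intro j hj
          simp only [Finset.mem_image] at hj
          obtain ⟨n, hn, rfl⟩ := hj
          exact hrange n hn
        · intro j _ _
          exact hwX0 j
    _ ≤ 4*Y^2 + (4*Y^2/Real.pi) * (2 * (2 + Real.log ((2*X:ℕ):ℝ))) := by
        simp only [hwX]
        rw [Finset.sum_add_distrib, ← Finset.mul_sum]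
        have hA : ∑ j ∈ Finset.Icc j₀ (j₀ + ((2*X:ℕ):ℤ)), (if j = 0 ∨ j = -1 then 2*Y^2 else 0)
            ≤ 4*Y^2 := by
          have hpt : ∀ j ∈ Finset.Icc j₀ (j₀ + ((2*X:ℕ):ℤ)),
              (if j = 0 ∨ j = -1 then 2*Y^2 else 0)
              ≤ (if j = (0:ℤ) then 2*Y^2 else 0) + (if j = (-1:ℤ) then 2*Y^2 else 0) := by
            intro j _
            by_cases h0 : j = 0
            · simp [h0]
            · by_cases h1 : j = -1
              · norm_num [h1]
              · simp [h0, h1]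
          calc ∑ j ∈ Finset.Icc j₀ (j₀ + ((2*X:ℕ):ℤ)), (if j = 0 ∨ j = -1 then 2*Y^2 else 0)
              ≤ ∑ j ∈ Finset.Icc j₀ (j₀ + ((2*X:ℕ):ℤ)),
                ((if j = (0:ℤ) then 2*Y^2 else 0) + (if j = (-1:ℤ) then 2*Y^2 else 0)) :=
                Finset.sum_le_sum hpt
            _ = (∑ j ∈ Finset.Icc j₀ (j₀ + ((2*X:ℕ):ℤ)), (if j = (0:ℤ) then 2*Y^2 else 0))
                + ∑ j ∈ Finset.Icc j₀ (j₀ + ((2*X:ℕ):ℤ)), (if j = (-1:ℤ) then 2*Y^2 else 0) :=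
                Finset.sum_add_distrib
            _ ≤ 2*Y^2 + 2*Y^2 := by
                apply add_le_add
                · rw [Finset.sum_ite_eq' (Finset.Icc j₀ (j₀ + ((2*X:ℕ):ℤ))) (0:ℤ)
                    (fun _ => 2*Y^2)]
                  split_ifs
                  · exact le_rfl
                  · positivity
                · rw [Finset.sum_ite_eq' (Finset.Icc j₀ (j₀ + ((2*X:ℕ):ℤ))) (-1:ℤ)
                    (fun _ => 2*Y^2)]
                  split_ifs
                  · exact le_rfl
                  · positivity
            _ = 4*Y^2 := by ring
        have hB := window_w1 (2*X) j₀
        have hmul : (4*Y^2/Real.pi) * (∑ j ∈ Finset.Icc j₀ (j₀ + ((2*X:ℕ):ℤ)), w1 (dj j))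
            ≤ (4*Y^2/Real.pi) * (2 * (2 + Real.log ((2*X:ℕ):ℝ))) := by
          apply mul_le_mul_of_nonneg_left _ (by positivity)
          exact_mod_cast hB
        linarith
    _ ≤ 50 * Y^2 * (1 + Real.log Y) := by
        have hlog2X : Real.log ((2*X:ℕ):ℝ) = Real.log 2 + Real.log Y := by
          rw [hYdef]
          push_cast
          rw [Real.log_mul (by norm_num) (by positivity)]
        have hlog2 : Real.log 2 < 0.6931471808 := Real.log_two_lt_d9
        have hlog2' : 0 ≤ Real.log 2 := Real.log_nonneg (by norm_num)
        have hL : 0 ≤ Real.log Y := Real.log_nonneg hY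
        have hB2 : (0:ℝ) < Y^2 := by positivity
        rw [hlog2X]
        have hZ : (0:ℝ) ≤ 2 * (2 + (Real.log 2 + Real.log Y)) := by linarith
        have hstep : 4*Y^2/Real.pi ≤ 2*Y^2 := by
          rw [div_le_iff₀ hπ0]
          nlinarith
        have hstep2 : (4*Y^2/Real.pi) * (2 * (2 + (Real.log 2 + Real.log Y)))
            ≤ (2*Y^2) * (2 * (2 + (Real.log 2 + Real.log Y))) :=
          mul_le_mul_of_nonneg_right hstep hZ
        nlinarith [mul_le_mul_of_nonneg_left hlog2.le hB2.le,
          mul_nonneg hB2.le hL]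



lemma sum_m0_le (r X : ℕ) (hr : 1 ≤ r) (hX : 1 ≤ X) :
    ∑ x ∈ Fintype.piFinset (fun _ : Fin (2 * r) => Finset.Ico X (2 * X)),
        m0 ((X:ℝ)^2) (tv r x)
      ≤ (X:ℝ)^(2*r-1) * (50 * (X:ℝ)^2 * (1 + Real.log X)) := by
  haveI : NeZero (2 * r) := ⟨by omega⟩
  classical
  set τ := Fintype.piFinset (fun _ : Fin (2 * r) => Finset.Ico X (2 * X)) with hτ
  set g : (Fin (2 * r) → ℕ) → (Fin (2 * r) → ℕ) := fun x => Function.update x 0 0 with hg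
  have hmaps : ∀ x ∈ τ, g x ∈ τ.image g := fun x hx => Finset.mem_image_of_mem g hx
  rw [← Finset.sum_fiberwise_of_maps_to hmaps]
  have hK0 : (0:ℝ) ≤ 50 * (X:ℝ)^2 * (1 + Real.log X) := by
    have : (0:ℝ) ≤ Real.log X := Real.log_nonneg (by exact_mod_cast hX)
    positivity
  have hinner : ∀ y ∈ τ.image g,
      ∑ x ∈ τ.filter (fun x => g x = y), m0 ((X:ℝ)^2) (tv r x)
        ≤ 50 * (X:ℝ)^2 * (1 + Real.log X) := by
    intro y hy
    have hy0 : y 0 = 0 := by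
      obtain ⟨x, _, rfl⟩ := Finset.mem_image.mp hy
      simp [hg]
    have hsub : τ.filter (fun x => g x = y)
        ⊆ (Finset.Ico X (2 * X)).image (fun n => Function.update y 0 n) := by
      intro x hx
      obtain ⟨hx1, hx2⟩ := Finset.mem_filter.mp hx
      refine Finset.mem_image.mpr ⟨x 0, Fintype.mem_piFinset.mp hx1 0, ?_⟩
      funext i
      by_cases h : i = 0
      · subst h; simp [Function.update_self]
      · rw [Function.update_of_ne h, ← hx2, hg]
        simp only
        rw [Function.update_of_ne h]
    have hupdinj : ∀ n ∈ Finset.Ico X (2 * X), ∀ n' ∈ Finset.Ico X (2 * X),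
        Function.update y 0 n = Function.update y 0 n' → n = n' := by
      intro n _ n' _ h
      have := congrFun h 0
      simpa [Function.update_self] using this
    calc ∑ x ∈ τ.filter (fun x => g x = y), m0 ((X:ℝ)^2) (tv r x)
        ≤ ∑ x ∈ (Finset.Ico X (2 * X)).image (fun n => Function.update y 0 n),
            m0 ((X:ℝ)^2) (tv r x) :=
          Finset.sum_le_sum_of_subset_of_nonneg hsub
            (fun x _ _ => m0_nonneg (by positivity) _)
      _ = ∑ n ∈ Finset.Ico X (2 * X), m0 ((X:ℝ)^2) (tv r (Function.update y 0 n)) :=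
          Finset.sum_image hupdinj
      _ = ∑ n ∈ Finset.Ico X (2 * X), m0 ((X:ℝ)^2)
            (1 / (n:ℝ) + ∑ i ∈ Finset.univ.erase (0 : Fin (2*r)),
              (if (i : ℕ) < r then (1 : ℝ) else -1) / (y i : ℝ)) := by
          refine Finset.sum_congr rfl fun n _ => ?_
          congr 1
          rw [tv, ← Finset.add_sum_erase _ _ (Finset.mem_univ (0 : Fin (2*r)))]
          congr 1
          · have h0 : ((0 : Fin (2*r)) : ℕ) = 0 := rfl
            rw [h0, if_pos (by omega : 0 < r), Function.update_self]
          · refine Finset.sum_congr rfl fun i hi => ?_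
            rw [Function.update_of_ne (Finset.ne_of_mem_erase hi)]
      _ ≤ 50 * (X:ℝ)^2 * (1 + Real.log X) := fiber_sum X hX _
  have hcard : ((τ.image g).card : ℝ) ≤ (X:ℝ)^(2*r-1) := by
    have hsubim : τ.image g ⊆ Fintype.piFinset
        (fun i : Fin (2 * r) => if i = 0 then ({0} : Finset ℕ) else Finset.Ico X (2 * X)) := by
      intro y hy
      obtain ⟨x, hx, rfl⟩ := Finset.mem_image.mp hy
      refine Fintype.mem_piFinset.mpr fun i => ?_
      by_cases h : i = 0
      · subst h; simp [hg, Function.update_self]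
      · simp only [if_neg h, hg]
        rw [Function.update_of_ne h]
        exact Fintype.mem_piFinset.mp hx i
    have h1 : (τ.image g).card ≤ X^(2*r-1) := by
      refine le_trans (Finset.card_le_card hsubim) ?_
      rw [Fintype.card_piFinset]
      have hprod : ∏ i : Fin (2 * r),
          (if i = 0 then ({0} : Finset ℕ) else Finset.Ico X (2 * X)).card
          = ∏ i : Fin (2 * r), (if i = 0 then 1 else X) := by
        refine Finset.prod_congr rfl fun i _ => ?_
        by_cases h : i = 0
        · simp [h]
        · simp [h, Nat.card_Ico]
          omega
      rw [hprod, ← Finset.mul_prod_erase Finset.univ _ (Finset.mem_univ (0 : Fin (2*r))),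
        if_pos rfl, one_mul]
      have hconst : ∏ i ∈ Finset.univ.erase (0 : Fin (2*r)), (if i = 0 then 1 else X)
          = X ^ ((Finset.univ.erase (0 : Fin (2*r))).card) := by
        rw [Finset.prod_congr rfl fun i hi => if_neg (Finset.ne_of_mem_erase hi),
          Finset.prod_const]
      rw [hconst, Finset.card_erase_of_mem (Finset.mem_univ _), Finset.card_univ,
        Fintype.card_fin]
    calc ((τ.image g).card : ℝ) ≤ ((X^(2*r-1) : ℕ) : ℝ) := by exact_mod_cast h1
      _ = (X:ℝ)^(2*r-1) := by push_cast; ring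
  calc ∑ y ∈ τ.image g, ∑ x ∈ τ.filter (fun x => g x = y), m0 ((X:ℝ)^2) (tv r x)
      ≤ ∑ _y ∈ τ.image g, 50 * (X:ℝ)^2 * (1 + Real.log X) := Finset.sum_le_sum hinner
    _ = ((τ.image g).card : ℝ) * (50 * (X:ℝ)^2 * (1 + Real.log X)) := by
        rw [Finset.sum_const, nsmul_eq_mul]
    _ ≤ (X:ℝ)^(2*r-1) * (50 * (X:ℝ)^2 * (1 + Real.log X)) :=
        mul_le_mul_of_nonneg_right hcard hK0




lemma expS_continuous (X : ℕ) : Continuous (expS X) := by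
  unfold expS
  refine continuous_finset_sum _ fun x _ => ?_
  exact Complex.continuous_exp.comp <| by fun_prop

lemma Ff_continuous (r X : ℕ) : Continuous (Ff r X) :=
  ((expS_continuous X).norm).pow _

lemma inner_eq (T t ξ : ℝ) :
    ∫ η in (0:ℝ)..T, Real.cos (2 * Real.pi * ((ξ - η) * t))
      = Real.cos (2 * Real.pi * (ξ * t)) * (∫ η in (0:ℝ)..T, Real.cos (2 * Real.pi * (η * t)))
      + Real.sin (2 * Real.pi * (ξ * t)) * (∫ η in (0:ℝ)..T, Real.sin (2 * Real.pi * (η * t))) := by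
  have hpt : ∀ η : ℝ, Real.cos (2 * Real.pi * ((ξ - η) * t))
      = Real.cos (2 * Real.pi * (ξ * t)) * Real.cos (2 * Real.pi * (η * t))
      + Real.sin (2 * Real.pi * (ξ * t)) * Real.sin (2 * Real.pi * (η * t)) := by
    intro η
    rw [← Real.cos_sub]
    congr 1
    ring
  rw [intervalIntegral.integral_congr (fun η _ => hpt η),
    intervalIntegral.integral_add (by apply Continuous.intervalIntegrable; fun_prop)
      (by apply Continuous.intervalIntegrable; fun_prop),
    intervalIntegral.integral_const_mul, intervalIntegral.integral_const_mul]

lemma outer_eq (T t c s : ℝ) :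
    ∫ ξ in (0:ℝ)..T, (Real.cos (2 * Real.pi * (ξ * t)) * c + Real.sin (2 * Real.pi * (ξ * t)) * s)
      = (∫ ξ in (0:ℝ)..T, Real.cos (2 * Real.pi * (ξ * t))) * c
        + (∫ ξ in (0:ℝ)..T, Real.sin (2 * Real.pi * (ξ * t))) * s := by
  rw [intervalIntegral.integral_add (by apply Continuous.intervalIntegrable; fun_prop)
      (by apply Continuous.intervalIntegrable; fun_prop),
    intervalIntegral.integral_mul_const, intervalIntegral.integral_mul_const]


end SpacingAux

open SpacingAux



set_option maxHeartbeats 1000000 in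
/-- Conditional spacing bound for unit fractions: square-root cancellation for the
exponential sum `∑_{X ≤ x < 2X} e(ξ/x)` in the range `X² ≤ |ξ| ≤ X^{r+1}` implies the
spacing conjecture: at most `C'(ε,r) X^{r+ε}` tuples `(x₁, …, x_{2r})` of integers in
`[X, 2X)` satisfy `|1/x₁ + ⋯ + 1/x_r - 1/x_{r+1} - ⋯ - 1/x_{2r}| ≤ X^{-(r+1)}`. -/
theorem exp_sum_bound_implies_spacing (r : ℕ) (hr : 1 ≤ r)
    (hexp : ∀ ε : ℝ, 0 < ε → ∃ C : ℝ, 0 < C ∧ ∀ X : ℕ, 1 ≤ X →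
      ∀ ξ : ℝ, (X : ℝ) ^ 2 ≤ |ξ| → |ξ| ≤ (X : ℝ) ^ (r + 1) →
        ‖∑ x ∈ Finset.Ico X (2 * X),
            Complex.exp (2 * Real.pi * Complex.I * ((ξ : ℂ) / x))‖
          ≤ C * (X : ℝ) ^ ((1 : ℝ) / 2 + ε)) :
    ∀ ε : ℝ, 0 < ε → ∃ C' : ℝ, 0 < C' ∧ ∀ X : ℕ, 1 ≤ X →
      (((Fintype.piFinset fun _ : Fin (2 * r) => Finset.Ico X (2 * X))).filter
          (fun x : Fin (2 * r) → ℕ =>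
            |∑ i : Fin (2 * r), (if (i : ℕ) < r then (1 : ℝ) else -1) / (x i : ℝ)|
              ≤ ((X : ℝ) ^ (r + 1))⁻¹)).card
        ≤ C' * (X : ℝ) ^ ((r : ℝ) + ε) := by
  intro ε hε
  have hrR : (1:ℝ) ≤ (r:ℝ) := by exact_mod_cast hr
  set ε' : ℝ := ε / (2 * (r:ℝ)) with hε'def
  have hε'pos : 0 < ε' := by rw [hε'def]; positivity
  obtain ⟨C, hC0, hCb⟩ := hexp ε' hε'pos
  refine ⟨4 * C^(2*r) + 800 * (1 + 1/ε), by positivity, ?_⟩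
  intro X hX
  set Y : ℝ := (X:ℝ) with hYdef
  have hY1 : 1 ≤ Y := by rw [hYdef]; exact_mod_cast hX
  have hY0 : 0 < Y := by linarith
  set T : ℝ := Y^(r+1)/4 with hTdef
  have hT0 : 0 < T := by rw [hTdef]; positivity
  have hTle : T ≤ Y^(r+1) := by
    rw [hTdef]
    have : (0:ℝ) < Y^(r+1) := by positivity
    linarith
  have hA1 : (1:ℝ) ≤ Y^2 := by nlinarith
  set M : ℝ := (C * Y^((1:ℝ)/2 + ε'))^(2*r) with hMdef
  have hM0 : (0:ℝ) ≤ M := by rw [hMdef]; positivity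
  have hFM : ∀ ζ : ℝ, Y^2 ≤ |ζ| → |ζ| ≤ Y^(r+1) → Ff r X ζ ≤ M := by
    intro ζ h1 h2
    rw [hMdef]
    apply pow_le_pow_left₀ (norm_nonneg _) (hCb X hX ζ h1 h2)
  set τ := Fintype.piFinset (fun _ : Fin (2 * r) => Finset.Ico X (2 * X)) with hτ
  set G := τ.filter (fun x : Fin (2 * r) → ℕ =>
      |∑ i : Fin (2 * r), (if (i : ℕ) < r then (1 : ℝ) else -1) / (x i : ℝ)|
        ≤ ((X : ℝ) ^ (r + 1))⁻¹) with hG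
  set cc : (Fin (2 * r) → ℕ) → ℝ :=
    fun x => ∫ ξ in (0:ℝ)..T, Real.cos (2 * Real.pi * (ξ * tv r x)) with hcc
  set ss : (Fin (2 * r) → ℕ) → ℝ :=
    fun x => ∫ ξ in (0:ℝ)..T, Real.sin (2 * Real.pi * (ξ * tv r x)) with hss
  -- lower bound on bad tuples
  have hlow : ∀ x ∈ G, (T/2)^2 ≤ cc x^2 + ss x^2 := by
    intro x hxG
    have hmem := Finset.mem_filter.mp hxG
    have htv : |tv r x| ≤ (Y^(r+1))⁻¹ := hmem.2
    have h14 : (1:ℝ)/(4*T) = (Y^(r+1))⁻¹ := by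
      rw [hTdef]
      field_simp
    have hc := cos_int_lower T (tv r x) hT0 (by rw [h14]; exact htv)
    have hc0 : (0:ℝ) ≤ T/2 := by positivity
    have hccx : T/2 ≤ cc x := by rw [hcc]; exact hc
    nlinarith [sq_nonneg (ss x)]
  have hcount : (G.card : ℝ) * ((T/2)^2) ≤ ∑ x ∈ G, (cc x^2 + ss x^2) := by
    have h := Finset.card_nsmul_le_sum G (fun x => cc x^2 + ss x^2) ((T/2)^2) hlow
    rwa [nsmul_eq_mul] at h
  have hGsub : ∑ x ∈ G, (cc x^2 + ss x^2) ≤ ∑ x ∈ τ, (cc x^2 + ss x^2) :=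
    Finset.sum_le_sum_of_subset_of_nonneg (Finset.filter_subset _ _)
      (fun x _ _ => by positivity)
  -- identity
  have hIdent : ∑ x ∈ τ, (cc x^2 + ss x^2)
      = ∫ ξ in (0:ℝ)..T, ∑ x ∈ τ, (Real.cos (2 * Real.pi * (ξ * tv r x)) * cc x
          + Real.sin (2 * Real.pi * (ξ * tv r x)) * ss x) := by
    rw [intervalIntegral.integral_finset_sum
      (fun x _ => by apply Continuous.intervalIntegrable; fun_prop)]
    refine Finset.sum_congr rfl fun x _ => ?_
    simp only [hcc, hss]
    rw [outer_eq]
    ring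
  set Smol : ℝ := ∑ x ∈ τ, m0 (Y^2) (tv r x) with hSmolDef
  have hSmol0 : 0 ≤ Smol := by
    rw [hSmolDef]
    exact Finset.sum_nonneg fun x _ => m0_nonneg (by positivity) _
  -- pointwise bound on the integrand
  have hxi : ∀ ξ ∈ Set.Icc (0:ℝ) T,
      (∑ x ∈ τ, (Real.cos (2 * Real.pi * (ξ * tv r x)) * cc x
        + Real.sin (2 * Real.pi * (ξ * tv r x)) * ss x)) ≤ T*M + Smol := by
    intro ξ hξ
    obtain ⟨hξ0, hξT⟩ := hξ
    set l : ℝ := max 0 (ξ - Y^2) with hldef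
    set u : ℝ := min T (ξ + Y^2) with hudef
    have hl0 : 0 ≤ l := le_max_left _ _
    have hlu : l ≤ u := by
      rw [hldef, hudef]
      apply max_le (le_min hT0.le (by nlinarith)) (le_min (by nlinarith) (by nlinarith))
    have huT : u ≤ T := min_le_left _ _
    have h2A : u - l ≤ 2 * Y^2 := by
      have h1 : ξ - Y^2 ≤ l := le_max_right _ _
      have h2 : u ≤ ξ + Y^2 := min_le_right _ _
      linarith
    have ic : ∀ (x : Fin (2 * r) → ℕ) (a b : ℝ),
        IntervalIntegrable (fun η => Real.cos (2 * Real.pi * ((ξ - η) * tv r x))) volume a b :=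
      fun x a b => Continuous.intervalIntegrable (by fun_prop) a b
    have hstep1 : ∑ x ∈ τ, (Real.cos (2 * Real.pi * (ξ * tv r x)) * cc x
          + Real.sin (2 * Real.pi * (ξ * tv r x)) * ss x)
        = (∑ x ∈ τ, ∫ η in (0:ℝ)..l, Real.cos (2 * Real.pi * ((ξ - η) * tv r x)))
          + (∑ x ∈ τ, ∫ η in l..u, Real.cos (2 * Real.pi * ((ξ - η) * tv r x)))
          + (∑ x ∈ τ, ∫ η in u..T, Real.cos (2 * Real.pi * ((ξ - η) * tv r x))) := by
      rw [← Finset.sum_add_distrib, ← Finset.sum_add_distrib]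
      refine Finset.sum_congr rfl fun x _ => ?_
      simp only [hcc, hss]
      rw [← inner_eq T (tv r x) ξ]
      rw [integral_add_adjacent_intervals (ic x 0 l) (ic x l u),
        integral_add_adjacent_intervals (ic x 0 u) (ic x u T)]
    rw [hstep1]
    -- term 1
    have hT1 : (∑ x ∈ τ, ∫ η in (0:ℝ)..l, Real.cos (2 * Real.pi * ((ξ - η) * tv r x)))
        = ∫ η in (0:ℝ)..l, Ff r X (ξ - η) := by
      rw [← intervalIntegral.integral_finset_sum (fun x _ => ic x 0 l)]
      exact intervalIntegral.integral_congr fun η _ => cos_sum_eq r X (ξ - η)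
    have hT1le : (∫ η in (0:ℝ)..l, Ff r X (ξ - η)) ≤ l * M := by
      rcases le_or_gt (Y^2) ξ with hcase | hcase
      · have hleq : l = ξ - Y^2 := max_eq_right (by linarith)
        have hb : ∀ η ∈ Set.Icc (0:ℝ) l, Ff r X (ξ - η) ≤ M := by
          intro η hη
          have h1 : Y^2 ≤ ξ - η := by
            have := hη.2
            rw [hleq] at this
            linarith
          have h2 : ξ - η ≤ Y^(r+1) := by
            have := hη.1
            have h3 : ξ - η ≤ ξ := by linarith
            linarith [hTle]
          apply hFM
          · rw [abs_of_nonneg (by nlinarith)]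
            exact h1
          · rw [abs_of_nonneg (by nlinarith)]
            exact h2
        calc (∫ η in (0:ℝ)..l, Ff r X (ξ - η)) ≤ ∫ _η in (0:ℝ)..l, M :=
              intervalIntegral.integral_mono_on hl0
                (Continuous.intervalIntegrable
                  ((Ff_continuous r X).comp (by fun_prop)) _ _)
                intervalIntegrable_const hb
          _ = l * M := by rw [intervalIntegral.integral_const, smul_eq_mul, sub_zero]
      · have hleq : l = 0 := max_eq_left (by linarith)
        rw [hleq, intervalIntegral.integral_same, zero_mul]
    -- term 3
    have hT3 : (∑ x ∈ τ, ∫ η in u..T, Real.cos (2 * Real.pi * ((ξ - η) * tv r x)))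
        = ∫ η in u..T, Ff r X (ξ - η) := by
      rw [← intervalIntegral.integral_finset_sum (fun x _ => ic x u T)]
      exact intervalIntegral.integral_congr fun η _ => cos_sum_eq r X (ξ - η)
    have hT3le : (∫ η in u..T, Ff r X (ξ - η)) ≤ (T - u) * M := by
      rcases le_or_gt (ξ + Y^2) T with hcase | hcase
      · have hueq : u = ξ + Y^2 := min_eq_right (by linarith)
        have hb : ∀ η ∈ Set.Icc u T, Ff r X (ξ - η) ≤ M := by
          intro η hη
          have h1 : Y^2 ≤ η - ξ := by
            have := hη.1
            rw [hueq] at this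
            linarith
          have h2 : η - ξ ≤ Y^(r+1) := by
            have := hη.2
            linarith [hTle]
          apply hFM
          · rw [abs_sub_comm, abs_of_nonneg (by nlinarith)]
            exact h1
          · rw [abs_sub_comm, abs_of_nonneg (by nlinarith)]
            exact h2
        calc (∫ η in u..T, Ff r X (ξ - η)) ≤ ∫ _η in u..T, M :=
              intervalIntegral.integral_mono_on huT
                (Continuous.intervalIntegrable
                  ((Ff_continuous r X).comp (by fun_prop)) _ _)
                intervalIntegrable_const hb
          _ = (T - u) * M := by rw [intervalIntegral.integral_const, smul_eq_mul]
      · have hueq : u = T := min_eq_left (by linarith)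
        rw [hueq, intervalIntegral.integral_same, sub_self, zero_mul]
    -- term 2
    have hT2le : (∑ x ∈ τ, ∫ η in l..u, Real.cos (2 * Real.pi * ((ξ - η) * tv r x))) ≤ Smol := by
      rw [hSmolDef]
      refine Finset.sum_le_sum fun x _ => ?_
      exact le_trans (le_abs_self _) (cos_int_upper (Y^2) (tv r x) l u ξ hlu h2A)
    rw [hT1, hT3]
    have hfin : l * M + (T - u) * M ≤ T * M := by
      have h := mul_le_mul_of_nonneg_right hlu hM0
      linarith
    linarith [hT1le, hT3le, hT2le]
  -- integral bound
  have hIb : (∫ ξ in (0:ℝ)..T, ∑ x ∈ τ, (Real.cos (2 * Real.pi * (ξ * tv r x)) * cc x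
        + Real.sin (2 * Real.pi * (ξ * tv r x)) * ss x)) ≤ T * (T*M + Smol) := by
    calc (∫ ξ in (0:ℝ)..T, ∑ x ∈ τ, (Real.cos (2 * Real.pi * (ξ * tv r x)) * cc x
          + Real.sin (2 * Real.pi * (ξ * tv r x)) * ss x))
        ≤ ∫ _ξ in (0:ℝ)..T, (T*M + Smol) := by
          apply intervalIntegral.integral_mono_on hT0.le _ intervalIntegrable_const hxi
          apply Continuous.intervalIntegrable
          exact continuous_finset_sum _ fun x _ => by fun_prop
      _ = T * (T*M + Smol) := by rw [intervalIntegral.integral_const, smul_eq_mul, sub_zero]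
  -- combine
  have hmain : (G.card : ℝ) * (T^2/4) ≤ T * (T*M + Smol) := by
    have heq : ((T/2)^2 : ℝ) = T^2/4 := by ring
    rw [← heq]
    calc (G.card : ℝ) * ((T/2)^2) ≤ ∑ x ∈ G, (cc x^2 + ss x^2) := hcount
      _ ≤ ∑ x ∈ τ, (cc x^2 + ss x^2) := hGsub
      _ = _ := hIdent
      _ ≤ T * (T*M + Smol) := hIb
  have hcard4 : (G.card : ℝ) ≤ 4*M + 4*Smol/T := by
    have h4 : (0:ℝ) < T^2/4 := by positivity
    have hid : (4*M + 4*Smol/T)*(T^2/4) = T * (T*M + Smol) := by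
      field_simp
    by_contra hcon
    push_neg at hcon
    have := mul_lt_mul_of_pos_right hcon h4
    rw [hid] at this
    linarith
  -- final numeric bounds
  have hrne : (r:ℝ) ≠ 0 := by linarith
  have hM' : M = C^(2*r) * Y^((r:ℝ)+ε) := by
    rw [hMdef, mul_pow, ← Real.rpow_natCast (Y^((1:ℝ)/2 + ε')) (2*r),
      ← Real.rpow_mul hY0.le]
    congr 1
    rw [hε'def]
    push_cast
    field_simp
  have hSm1 : Smol ≤ 50 * Y^(2*r+1) * (1 + Real.log Y) := by
    have h := sum_m0_le r X hr hX
    rw [← hYdef] at h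
    calc Smol ≤ Y^(2*r-1) * (50 * Y^2 * (1 + Real.log Y)) := h
      _ = 50 * Y^(2*r+1) * (1 + Real.log Y) := by
          rw [show 2*r+1 = (2*r-1) + 2 by omega, pow_add]
          ring
  have hL0 : 0 ≤ Real.log Y := Real.log_nonneg hY1
  have hlogle : 1 + Real.log Y ≤ (1 + 1/ε) * Y^ε := by
    have h1 : Real.log Y ≤ Y^ε / ε := Real.log_le_rpow_div hY0.le hε
    have h2 : (1:ℝ) ≤ Y^ε := Real.one_le_rpow hY1 hε.le
    have h3 : Y^ε/ε = (1/ε) * Y^ε := by ring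
    rw [h3] at h1
    nlinarith
  have hSm2 : 4*Smol/T ≤ 800 * (1 + 1/ε) * Y^((r:ℝ)+ε) := by
    have hpow : Y^(2*r+1) = Y^r * Y^(r+1) := by
      rw [← pow_add]
      congr 1
      omega
    have hden : (0:ℝ) < Y^(r+1) := by positivity
    have hstep : 4*Smol/T = 16*Smol/Y^(r+1) := by
      rw [hTdef]
      field_simp
      ring
    rw [hstep]
    have h1 : 16*Smol/Y^(r+1) ≤ 16*(50 * Y^(2*r+1) * (1 + Real.log Y))/Y^(r+1) := by
      gcongr
    have heq2 : 16*(50 * Y^(2*r+1) * (1 + Real.log Y))/Y^(r+1)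
        = 800 * Y^r * (1 + Real.log Y) := by
      rw [hpow]
      field_simp
      ring
    calc 16*Smol/Y^(r+1) ≤ 16*(50 * Y^(2*r+1) * (1 + Real.log Y))/Y^(r+1) := h1
      _ = 800 * Y^r * (1 + Real.log Y) := heq2
      _ ≤ 800 * Y^r * ((1 + 1/ε) * Y^ε) := by
          apply mul_le_mul_of_nonneg_left hlogle (by positivity)
      _ = 800 * (1 + 1/ε) * Y^((r:ℝ)+ε) := by
          rw [Real.rpow_add hY0, Real.rpow_natCast]
          ring
  calc (G.card : ℝ) ≤ 4*M + 4*Smol/T := hcard4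
    _ ≤ 4*(C^(2*r) * Y^((r:ℝ)+ε)) + 800 * (1 + 1/ε) * Y^((r:ℝ)+ε) := by
        rw [hM']
        linarith [hSm2]
    _ = (4 * C^(2*r) + 800 * (1 + 1/ε)) * Y^((r:ℝ)+ε) := by ring

end
end
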